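/- Let q ∈ Q_{k-1}([0,1]^3) with k ≥ 2 and let 0 = x_1 < ... < x_{k+1} = 1 be distinct points. If ∂_1 q vanishes on the grid {(x_{j1},x_{j2},x_{j3}) : 2 ≤ j1 ≤ k, 1 ≤ j2,j3 ≤ k}, ∂_2 q vanishes on {(x_{j1},x_{j2},x_{j3}) : 2 ≤ j2 ≤ k, 1 ≤ j1,j3 ≤ k}, and ∂_3 q vanishes on {(x_{j1},x_{j2},x_{j3}) : 2 ≤ j3 ≤ k, 1 ≤ j1,j2 ≤ k}, then q is constant. -/
import Mathlib

open MvPolynomial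

private lemma degreeOf_monomial_le' {σ : Type*} (i : σ) (s : σ →₀ ℕ) (a : ℝ) :
    degreeOf i (monomial s a : MvPolynomial σ ℝ) ≤ s i := by
  classical
  by_cases h : a = 0
  · simp [h]
  · rw [degreeOf_monomial_eq s i h]

private lemma degreeOf_pderiv_le' (p : MvPolynomial (Fin 3) ℝ) (i j : Fin 3) :
    degreeOf j (pderiv i p) ≤ degreeOf j p := by
  conv_lhs => rw [p.as_sum, map_sum]
  refine (degreeOf_sum_le _ _ _).trans (Finset.sup_le fun m hm => ?_)
  rw [pderiv_monomial]
  refine (degreeOf_monomial_le' _ _ _).trans ?_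
  refine le_trans ?_ (monomial_le_degreeOf j hm)
  rw [Finsupp.tsub_apply]
  exact Nat.sub_le _ _

private lemma degreeOf_pderiv_self_le' (p : MvPolynomial (Fin 3) ℝ) (i : Fin 3) :
    degreeOf i (pderiv i p) ≤ degreeOf i p - 1 := by
  conv_lhs => rw [p.as_sum, map_sum]
  refine (degreeOf_sum_le _ _ _).trans (Finset.sup_le fun m hm => ?_)
  rw [pderiv_monomial]
  refine (degreeOf_monomial_le' _ _ _).trans ?_
  rw [Finsupp.tsub_apply, Finsupp.single_apply, if_pos rfl]
  exact Nat.sub_le_sub_right (monomial_le_degreeOf i hm) 1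

private lemma eval_aeval' (p : MvPolynomial (Fin 3) ℝ) (i : Fin 3) (a : Fin 3 → ℝ) (t : ℝ) :
    Polynomial.eval t
      (aeval (fun j => if j = i then Polynomial.X else Polynomial.C (a j)) p)
      = eval (Function.update a i t) p := by
  induction p using MvPolynomial.induction_on with
  | C r => simp
  | add p q hp hq => simp [hp, hq]
  | mul_X p j hp =>
    rw [map_mul, Polynomial.eval_mul, hp, map_mul]
    congr 1
    rw [aeval_X, eval_X]
    rcases eq_or_ne j i with rfl | h
    · simp
    · simp [h, Function.update_of_ne h]

private lemma natDegree_aeval_le' (p : MvPolynomial (Fin 3) ℝ) (i : Fin 3) (a : Fin 3 → ℝ) :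
    (aeval (fun j => if j = i then Polynomial.X else Polynomial.C (a j)) p).natDegree
      ≤ degreeOf i p := by
  conv_lhs => rw [p.as_sum, map_sum]
  refine Polynomial.natDegree_sum_le_of_forall_le _ _ fun m hm => ?_
  rw [aeval_monomial]
  refine (Polynomial.natDegree_mul_le).trans ?_
  have h1 : (algebraMap ℝ (Polynomial ℝ) (coeff m p)).natDegree = 0 := by
    rw [Polynomial.algebraMap_eq]; exact Polynomial.natDegree_C _
  rw [h1, zero_add]
  refine le_trans ?_ (monomial_le_degreeOf i hm)
  rw [Finsupp.prod]
  refine (Polynomial.natDegree_prod_le _ _).trans ?_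
  have hb : ∀ j ∈ m.support,
      ((if j = i then Polynomial.X else Polynomial.C (a j)) ^ m j).natDegree
        ≤ if j = i then m i else 0 := by
    intro j hj
    rcases eq_or_ne j i with rfl | h
    · simp
    · simp [h, Polynomial.natDegree_pow]
  refine (Finset.sum_le_sum hb).trans ?_
  rw [Finset.sum_ite_eq' m.support i (fun _ => m i)]
  split <;> simp

private lemma key' (p : MvPolynomial (Fin 3) ℝ) (i : Fin 3) (S : Finset ℝ)
    (hdeg : degreeOf i p < S.card) (a : Fin 3 → ℝ)
    (h : ∀ s ∈ S, eval (Function.update a i s) p = 0) (t : ℝ) :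
    eval (Function.update a i t) p = 0 := by
  have hz : (aeval (fun j => if j = i then Polynomial.X else Polynomial.C (a j)) p) = 0 := by
    apply Polynomial.eq_zero_of_natDegree_lt_card_of_eval_eq_zero _
      (f := (Subtype.val : S → ℝ)) Subtype.val_injective
    · intro s
      rw [eval_aeval']
      exact h s s.2
    · rw [Fintype.card_coe]
      exact lt_of_le_of_lt (natDegree_aeval_le' p i a) hdeg
  have he := eval_aeval' p i a t
  rw [hz] at he
  simpa using he.symm

private lemma grid_zero' (p : MvPolynomial (Fin 3) ℝ) (d : Fin 3 → ℕ) (S : Fin 3 → Finset ℝ)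
    (hd : ∀ i, degreeOf i p ≤ d i) (hcard : ∀ i, d i < (S i).card)
    (hv : ∀ a : Fin 3 → ℝ, (∀ i, a i ∈ S i) → eval a p = 0) : p = 0 := by
  have step0 : ∀ a : Fin 3 → ℝ, a 1 ∈ S 1 → a 2 ∈ S 2 → eval a p = 0 := by
    intro a h1 h2
    have hall : ∀ s ∈ S 0, eval (Function.update a 0 s) p = 0 := by
      intro s hs
      apply hv
      intro i
      fin_cases i <;> simp [Function.update, hs, h1, h2]
    have := key' p 0 (S 0) (lt_of_le_of_lt (hd 0) (hcard 0)) a hall (a 0)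
    rwa [Function.update_eq_self] at this
  have step1 : ∀ a : Fin 3 → ℝ, a 2 ∈ S 2 → eval a p = 0 := by
    intro a h2
    have hall : ∀ s ∈ S 1, eval (Function.update a 1 s) p = 0 := by
      intro s hs
      apply step0 <;> simp [Function.update, hs, h2]
    have := key' p 1 (S 1) (lt_of_le_of_lt (hd 1) (hcard 1)) a hall (a 1)
    rwa [Function.update_eq_self] at this
  have step2 : ∀ a : Fin 3 → ℝ, eval a p = 0 := by
    intro a
    have hall : ∀ s ∈ S 2, eval (Function.update a 2 s) p = 0 := by
      intro s hs
      apply step1 <;> simp [Function.update, hs]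
    have := key' p 2 (S 2) (lt_of_le_of_lt (hd 2) (hcard 2)) a hall (a 2)
    rwa [Function.update_eq_self] at this
  apply MvPolynomial.funext
  intro y
  simp [step2 y]

private lemma pderiv_ne_zero_helper (p : MvPolynomial (Fin 3) ℝ) (i : Fin 3) (m : Fin 3 →₀ ℕ)
    (hm : m ∈ p.support) (hmi : m i ≠ 0) : pderiv i p ≠ 0 := by
  intro h0
  have hc : coeff (m - Finsupp.single i 1) (pderiv i p) = coeff m p * m i := by
    conv_lhs => rw [p.as_sum, map_sum]
    rw [MvPolynomial.coeff_sum]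
    simp only [pderiv_monomial, coeff_monomial]
    rw [Finset.sum_eq_single m]
    · rw [if_pos rfl]
    · intro s hs hsm
      split_ifs with he
      · by_cases hsi : s i = 0
        · simp [hsi]
        · exfalso
          apply hsm
          have h1 : Finsupp.single i 1 ≤ s := Finsupp.single_le_iff.mpr (by omega)
          have h2 : Finsupp.single i 1 ≤ m := Finsupp.single_le_iff.mpr (by omega)
          calc s = s - Finsupp.single i 1 + Finsupp.single i 1 :=
                  (tsub_add_cancel_of_le h1).symm
            _ = m - Finsupp.single i 1 + Finsupp.single i 1 := by rw [he]
            _ = m := tsub_add_cancel_of_le h2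
      · rfl
    · intro hm'
      exact absurd hm hm'
  rw [h0] at hc
  simp only [coeff_zero] at hc
  rw [mem_support_iff] at hm
  have := hc.symm
  rcases mul_eq_zero.mp this with h | h
  · exact hm h
  · exact hmi (by exact_mod_cast h)

theorem stmt_14 (k : ℕ) (hk : 2 ≤ k)
    (q : MvPolynomial (Fin 3) ℝ)
    (hq : ∀ i : Fin 3, degreeOf i q ≤ k - 1)
    (x : Fin (k + 1) → ℝ) (hx : StrictMono x)
    (hx0 : x 0 = 0) (hxlast : x (Fin.last k) = 1)
    (h1 : ∀ j₁ j₂ j₃ : Fin (k + 1),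
      1 ≤ (j₁ : ℕ) → (j₁ : ℕ) < k → (j₂ : ℕ) < k → (j₃ : ℕ) < k →
      MvPolynomial.eval ![x j₁, x j₂, x j₃] (pderiv 0 q) = 0)
    (h2 : ∀ j₁ j₂ j₃ : Fin (k + 1),
      1 ≤ (j₂ : ℕ) → (j₂ : ℕ) < k → (j₁ : ℕ) < k → (j₃ : ℕ) < k →
      MvPolynomial.eval ![x j₁, x j₂, x j₃] (pderiv 1 q) = 0)
    (h3 : ∀ j₁ j₂ j₃ : Fin (k + 1),
      1 ≤ (j₃ : ℕ) → (j₃ : ℕ) < k → (j₁ : ℕ) < k → (j₂ : ℕ) < k →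
      MvPolynomial.eval ![x j₁, x j₂, x j₃] (pderiv 2 q) = 0) :
    totalDegree q = 0 := by
  have hxinj := hx.injective
  have hIco : ∀ n ∈ Finset.Ico 1 k, n < k + 1 := by
    intro n hn
    have := (Finset.mem_Ico.mp hn).2
    omega
  have hR : ∀ n ∈ Finset.range k, n < k + 1 := by
    intro n hn
    have := Finset.mem_range.mp hn
    omega
  set S0 : Finset ℝ := ((Finset.Ico 1 k).attachFin hIco).image x with hS0
  set S1 : Finset ℝ := ((Finset.range k).attachFin hR).image x with hS1
  have hcard0 : S0.card = k - 1 := by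
    rw [hS0, Finset.card_image_of_injective _ hxinj, Finset.card_attachFin, Nat.card_Ico]
  have hcard1 : S1.card = k := by
    rw [hS1, Finset.card_image_of_injective _ hxinj, Finset.card_attachFin, Finset.card_range]
  have memS0 : ∀ s ∈ S0, ∃ j : Fin (k + 1), 1 ≤ (j : ℕ) ∧ (j : ℕ) < k ∧ x j = s := by
    intro s hs
    rw [hS0, Finset.mem_image] at hs
    obtain ⟨j, hj, hxj⟩ := hs
    rw [Finset.mem_attachFin, Finset.mem_Ico] at hj
    exact ⟨j, hj.1, hj.2, hxj⟩
  have memS1 : ∀ s ∈ S1, ∃ j : Fin (k + 1), (j : ℕ) < k ∧ x j = s := by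
    intro s hs
    rw [hS1, Finset.mem_image] at hs
    obtain ⟨j, hj, hxj⟩ := hs
    rw [Finset.mem_attachFin, Finset.mem_range] at hj
    exact ⟨j, hj, hxj⟩
  have hp0 : pderiv 0 q = 0 := by
    apply grid_zero' _ ![k - 2, k - 1, k - 1] ![S0, S1, S1]
    · intro i
      fin_cases i
      · show degreeOf 0 (pderiv 0 q) ≤ k - 2
        refine (degreeOf_pderiv_self_le' q 0).trans ?_
        have := hq 0
        omega
      · simpa using (degreeOf_pderiv_le' q 0 1).trans (hq 1)
      · simpa using (degreeOf_pderiv_le' q 0 2).trans (hq 2)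
    · intro i
      fin_cases i <;> simp [hcard0, hcard1] <;> omega
    · intro a ha
      obtain ⟨j₁, hj₁1, hj₁2, hxj₁⟩ := memS0 (a 0) (by simpa using ha 0)
      obtain ⟨j₂, hj₂, hxj₂⟩ := memS1 (a 1) (by simpa using ha 1)
      obtain ⟨j₃, hj₃, hxj₃⟩ := memS1 (a 2) (by simpa using ha 2)
      have := h1 j₁ j₂ j₃ hj₁1 hj₁2 hj₂ hj₃
      have hveq : ![x j₁, x j₂, x j₃] = a := by
        funext i
        fin_cases i <;> simp [hxj₁, hxj₂, hxj₃]
      rwa [hveq] at this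
  have hp1 : pderiv 1 q = 0 := by
    apply grid_zero' _ ![k - 1, k - 2, k - 1] ![S1, S0, S1]
    · intro i
      fin_cases i
      · simpa using (degreeOf_pderiv_le' q 1 0).trans (hq 0)
      · show degreeOf 1 (pderiv 1 q) ≤ k - 2
        refine (degreeOf_pderiv_self_le' q 1).trans ?_
        have := hq 1
        omega
      · simpa using (degreeOf_pderiv_le' q 1 2).trans (hq 2)
    · intro i
      fin_cases i <;> simp [hcard0, hcard1] <;> omega
    · intro a ha
      obtain ⟨j₁, hj₁, hxj₁⟩ := memS1 (a 0) (by simpa using ha 0)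
      obtain ⟨j₂, hj₂1, hj₂2, hxj₂⟩ := memS0 (a 1) (by simpa using ha 1)
      obtain ⟨j₃, hj₃, hxj₃⟩ := memS1 (a 2) (by simpa using ha 2)
      have := h2 j₁ j₂ j₃ hj₂1 hj₂2 hj₁ hj₃
      have hveq : ![x j₁, x j₂, x j₃] = a := by
        funext i
        fin_cases i <;> simp [hxj₁, hxj₂, hxj₃]
      rwa [hveq] at this
  have hp2 : pderiv 2 q = 0 := by
    apply grid_zero' _ ![k - 1, k - 1, k - 2] ![S1, S1, S0]
    · intro i
      fin_cases i
      · simpa using (degreeOf_pderiv_le' q 2 0).trans (hq 0)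
      · simpa using (degreeOf_pderiv_le' q 2 1).trans (hq 1)
      · show degreeOf 2 (pderiv 2 q) ≤ k - 2
        refine (degreeOf_pderiv_self_le' q 2).trans ?_
        have := hq 2
        omega
    · intro i
      fin_cases i <;> simp [hcard0, hcard1] <;> omega
    · intro a ha
      obtain ⟨j₁, hj₁, hxj₁⟩ := memS1 (a 0) (by simpa using ha 0)
      obtain ⟨j₂, hj₂, hxj₂⟩ := memS1 (a 1) (by simpa using ha 1)
      obtain ⟨j₃, hj₃1, hj₃2, hxj₃⟩ := memS0 (a 2) (by simpa using ha 2)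
      have := h3 j₁ j₂ j₃ hj₃1 hj₃2 hj₁ hj₂
      have hveq : ![x j₁, x j₂, x j₃] = a := by
        funext i
        fin_cases i <;> simp [hxj₁, hxj₂, hxj₃]
      rwa [hveq] at this
  rw [totalDegree_eq_zero_iff]
  intro m hm i
  by_contra hmi
  fin_cases i
  · exact pderiv_ne_zero_helper q 0 m hm hmi hp0
  · exact pderiv_ne_zero_helper q 1 m hm hmi hp1
  · exact pderiv_ne_zero_helper q 2 m hm hmi hp2
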